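/- Let V be a finite-dimensional real inner product space and W a subspace spanned by linearly independent vectors v₀,…,v_k with ⟨vᵢ, vⱼ⟩ ≤ 0 for i < j. If u ∈ V satisfies ⟨vᵢ, u⟩ ≤ 0 for all i, then u can be written as u = ε − u_C, where ε is orthogonal to W and u_C lies in the cone of nonnegative linear combinations of v₀, …, v_k (the dominant cone with respect to the dual basis in W). -/

import Mathlib

open RealInnerProductSpace

/-- For a real number, `min a 0 * max a 0 = 0`. -/
lemma min_mul_max_zero (a : ℝ) : min a 0 * max a 0 = 0 := by
  rcases le_or_gt a 0 with h | h
  · simp [max_eq_right h]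
  · simp [min_eq_right h.le]

/-- Langlands' lemma (coefficient form): if the `v i` are linearly independent with
pairwise nonpositive inner products, and `∑ c i • v i` has nonnegative inner product
with every `v i`, then all coefficients `c i` are nonnegative. -/
lemma langlands_nonneg_coeffs
    {V : Type*} [NormedAddCommGroup V] [InnerProductSpace ℝ V]
    {n : ℕ} (v : Fin n → V)
    (hli : LinearIndependent ℝ v)
    (hneg : ∀ i j, i ≠ j → ⟪v i, v j⟫ ≤ 0)
    (c : Fin n → ℝ)
    (hw : ∀ i, 0 ≤ ⟪v i, ∑ j, c j • v j⟫) :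
    ∀ i, 0 ≤ c i := by
  set w : V := ∑ j, c j • v j with hwdef
  set wm : V := ∑ i, (-min (c i) 0) • v i with hwm
  set wp : V := ∑ i, (max (c i) 0) • v i with hwp
  have hmin_nonneg : ∀ i, 0 ≤ -min (c i) 0 := fun i => by
    simp [neg_nonneg, min_le_iff]
  have hsplit : w = wp - wm := by
    rw [hwm, hwp, hwdef, ← Finset.sum_sub_distrib]
    refine Finset.sum_congr rfl fun i _ => ?_
    rw [← sub_smul]
    congr 1
    have := max_add_min (c i) 0
    linarith
  -- ⟪wm, w⟫ ≥ 0
  have h1 : 0 ≤ ⟪wm, w⟫ := by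
    rw [hwm, sum_inner]
    refine Finset.sum_nonneg fun i _ => ?_
    rw [real_inner_smul_left]
    exact mul_nonneg (hmin_nonneg i) (hw i)
  -- ⟪wm, wp⟫ ≤ 0
  have h2 : ⟪wm, wp⟫ ≤ 0 := by
    rw [hwm, hwp, sum_inner]
    refine Finset.sum_nonpos fun i _ => ?_
    rw [real_inner_smul_left, inner_sum, Finset.mul_sum]
    refine Finset.sum_nonpos fun j _ => ?_
    rw [real_inner_smul_right]
    rcases eq_or_ne i j with rfl | hij
    · have h0 := min_mul_max_zero (c i)
      have : -min (c i) 0 * (max (c i) 0 * ⟪v i, v i⟫) =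
          -(min (c i) 0 * max (c i) 0) * ⟪v i, v i⟫ := by ring
      rw [this, h0]
      simp
    · exact mul_nonpos_of_nonneg_of_nonpos (hmin_nonneg i)
        (mul_nonpos_of_nonneg_of_nonpos (le_max_right _ _) (hneg i j hij))
  -- hence wm = 0
  have hwm0 : wm = 0 := by
    have : ⟪wm, wm⟫ ≤ 0 := by
      have : ⟪wm, wm⟫ = ⟪wm, wp⟫ - ⟪wm, w⟫ := by
        rw [hsplit, inner_sub_right]; ring
      linarith
    exact real_inner_self_nonpos.mp this
  -- by linear independence, all the negative parts vanish
  have hzero : ∀ i, -min (c i) 0 = 0 := by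
    have := (Fintype.linearIndependent_iff.mp hli) (fun i => -min (c i) 0)
      (by rw [← hwm, hwm0])
    exact this
  intro i
  have := hzero i
  have hmin : min (c i) 0 = 0 := by linarith
  by_contra h
  push_neg at h
  rw [min_eq_left h.le] at hmin
  exact absurd hmin (ne_of_lt h)

/-- If `v₀,…,v_k` are linearly independent with pairwise nonpositive inner products and
`u` has nonpositive inner product with each `vᵢ`, then `u = ε − u_C` where `ε` is
orthogonal to `W = span{v₀,…,v_k}` and `u_C` is a nonnegative linear combination of the
`vᵢ`. -/
theorem decompose_nonpositive_vector
    {V : Type*} [NormedAddCommGroup V] [InnerProductSpace ℝ V] [FiniteDimensional ℝ V]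
    {k : ℕ} (v : Fin (k + 1) → V)
    (hli : LinearIndependent ℝ v)
    (hneg : ∀ i j, i < j → ⟪v i, v j⟫ ≤ 0)
    (u : V) (hu : ∀ i, ⟪v i, u⟫ ≤ 0) :
    ∃ (ε uC : V) (c : Fin (k + 1) → ℝ),
      u = ε - uC ∧ ε ∈ (Submodule.span ℝ (Set.range v))ᗮ ∧
      (∀ i, 0 ≤ c i) ∧ uC = ∑ i, c i • v i := by
  set K : Submodule ℝ V := Submodule.span ℝ (Set.range v) with hK
  set p : V := (K.orthogonalProjection u : V) with hp
  set ε : V := u - p with hε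
  have hεK : ε ∈ Kᗮ := K.sub_starProjection_mem_orthogonal u
  have hvK : ∀ i, v i ∈ K := fun i =>
    Submodule.subset_span (Set.mem_range_self i)
  have hinner_ε : ∀ i, ⟪v i, ε⟫ = 0 := fun i =>
    (Submodule.mem_orthogonal K ε).mp hεK (v i) (hvK i)
  -- -p lies in K
  have hnegpK : -p ∈ K := K.neg_mem (K.orthogonalProjection u).2
  obtain ⟨c, hc⟩ := (Submodule.mem_span_range_iff_exists_fun ℝ).mp hnegpK
  -- inner products of v i with -p are nonnegative
  have hinner : ∀ i, 0 ≤ ⟪v i, ∑ j, c j • v j⟫ := by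
    intro i
    rw [hc]
    have : ⟪v i, -p⟫ = ⟪v i, ε⟫ - ⟪v i, u⟫ := by
      rw [hε, inner_sub_right, inner_neg_right]; ring
    rw [this, hinner_ε i]
    linarith [hu i]
  have hneg' : ∀ i j, i ≠ j → ⟪v i, v j⟫ ≤ 0 := by
    intro i j hij
    rcases lt_or_gt_of_ne hij with h | h
    · exact hneg i j h
    · rw [real_inner_comm]; exact hneg j i h
  have hcnonneg := langlands_nonneg_coeffs v hli hneg' c hinner
  refine ⟨ε, ∑ i, c i • v i, c, ?_, hεK, hcnonneg, rfl⟩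
  rw [hc, hε]
  abel
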